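/- Relative smoothness for EMML: the function ℒ(θ) = KL(y, Ae^θ) is 1-relatively smooth with respect to 𝒜(θ) = Σ_{i,j} A_{ij} e^{θ_j} on ℝ^n when 0 ≤ yᵢ ≤ (Ae^θ)ᵢ is not required; precisely, 𝒜 - ℒ is convex on ℝ^n. -/

import Mathlib

open Real Finset

noncomputable def KL {m : ℕ} (u v : Fin m → ℝ) : ℝ :=
  ∑ i, (u i * Real.log (u i / v i) + v i - u i)

/-- Sum of convex functions over a finset is convex. -/
lemma convexOn_finset_sum {ι E : Type*} [AddCommGroup E] [Module ℝ E]
    {s : Set E} (hs : Convex ℝ s) (t : Finset ι) {f : ι → E → ℝ}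
    (hf : ∀ i ∈ t, ConvexOn ℝ s (f i)) :
    ConvexOn ℝ s (fun x => ∑ i ∈ t, f i x) := by
  classical
  induction t using Finset.induction_on with
  | empty => simpa using convexOn_const 0 hs
  | insert a t' hnot ih =>
    simp only [Finset.sum_insert hnot]
    exact (hf a (Finset.mem_insert_self a t')).add
      (ih fun i hi => hf i (Finset.mem_insert_of_mem hi))

/-- Log-sum-exp with positive weights is convex. -/
lemma convexOn_log_sum_exp {n : ℕ} (c : Fin n → ℝ) (S : Finset (Fin n))
    (hS : S.Nonempty) (hc : ∀ j ∈ S, 0 < c j) :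
    ConvexOn ℝ Set.univ (fun θ : Fin n → ℝ => Real.log (∑ j ∈ S, c j * Real.exp (θ j))) := by
  have hpos : ∀ θ : Fin n → ℝ, 0 < ∑ j ∈ S, c j * Real.exp (θ j) := by
    intro θ
    obtain ⟨j0, hj0⟩ := hS
    exact Finset.sum_pos' (fun j hj => le_of_lt (mul_pos (hc j hj) (Real.exp_pos _)))
      ⟨j0, hj0, mul_pos (hc j0 hj0) (Real.exp_pos _)⟩
  refine ⟨convex_univ, ?_⟩
  intro x _ z _ a b ha hb hab
  rcases eq_or_lt_of_le ha with rfl | ha'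
  · simp at hab; subst hab; simp
  rcases eq_or_lt_of_le hb with rfl | hb'
  · simp at hab; subst hab; simp
  -- now 0 < a, 0 < b, a + b = 1
  have ha1 : a < 1 := by linarith
  have hpq : Real.HolderConjugate (1 / a) (1 / b) := by
    constructor
    · simp only [one_div, inv_inv, inv_one]; exact hab
    · positivity
    · positivity
  have key : ∑ j ∈ S, c j * Real.exp ((a • x + b • z) j)
      ≤ (∑ j ∈ S, c j * Real.exp (x j)) ^ a * (∑ j ∈ S, c j * Real.exp (z j)) ^ b := by
    have H := Real.inner_le_Lp_mul_Lq_of_nonneg S hpq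
      (f := fun j => (c j * Real.exp (x j)) ^ a)
      (g := fun j => (c j * Real.exp (z j)) ^ b)
      (fun j hj => Real.rpow_nonneg (le_of_lt (mul_pos (hc j hj) (Real.exp_pos _))) a)
      (fun j hj => Real.rpow_nonneg (le_of_lt (mul_pos (hc j hj) (Real.exp_pos _))) b)
    have h1 : ∀ j ∈ S, (c j * Real.exp (x j)) ^ a * (c j * Real.exp (z j)) ^ b
        = c j * Real.exp ((a • x + b • z) j) := by
      intro j hj
      have hcj := (hc j hj).le
      rw [Real.mul_rpow hcj (Real.exp_pos _).le, Real.mul_rpow hcj (Real.exp_pos _).le,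
        ← Real.exp_mul, ← Real.exp_mul]
      have : c j ^ a * Real.exp (x j * a) * (c j ^ b * Real.exp (z j * b))
          = (c j ^ a * c j ^ b) * Real.exp (x j * a + z j * b) := by
        rw [Real.exp_add]; ring
      rw [this, ← Real.rpow_add (hc j hj), hab, Real.rpow_one]
      simp only [Pi.add_apply, Pi.smul_apply, smul_eq_mul]
      ring_nf
    have h2 : ∀ j ∈ S, ((c j * Real.exp (x j)) ^ a) ^ (1/a : ℝ) = c j * Real.exp (x j) := by
      intro j hj
      rw [← Real.rpow_mul (le_of_lt (mul_pos (hc j hj) (Real.exp_pos _))),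
        mul_one_div, div_self (ne_of_gt ha'), Real.rpow_one]
    have h3 : ∀ j ∈ S, ((c j * Real.exp (z j)) ^ b) ^ (1/b : ℝ) = c j * Real.exp (z j) := by
      intro j hj
      rw [← Real.rpow_mul (le_of_lt (mul_pos (hc j hj) (Real.exp_pos _))),
        mul_one_div, div_self (ne_of_gt hb'), Real.rpow_one]
    have e1 : (1:ℝ) / (1 / a) = a := one_div_one_div a
    have e2 : (1:ℝ) / (1 / b) = b := one_div_one_div b
    calc ∑ j ∈ S, c j * Real.exp ((a • x + b • z) j)
        = ∑ j ∈ S, (c j * Real.exp (x j)) ^ a * (c j * Real.exp (z j)) ^ b :=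
          (Finset.sum_congr rfl h1).symm
      _ ≤ (∑ j ∈ S, ((c j * Real.exp (x j)) ^ a) ^ (1/a : ℝ)) ^ ((1:ℝ)/(1/a))
          * (∑ j ∈ S, ((c j * Real.exp (z j)) ^ b) ^ (1/b : ℝ)) ^ ((1:ℝ)/(1/b)) := H
      _ = (∑ j ∈ S, c j * Real.exp (x j)) ^ a * (∑ j ∈ S, c j * Real.exp (z j)) ^ b := by
          rw [Finset.sum_congr rfl h2, Finset.sum_congr rfl h3, e1, e2]
  calc Real.log (∑ j ∈ S, c j * Real.exp ((a • x + b • z) j))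
      ≤ Real.log ((∑ j ∈ S, c j * Real.exp (x j)) ^ a * (∑ j ∈ S, c j * Real.exp (z j)) ^ b) :=
        Real.log_le_log (hpos _) key
    _ = a * Real.log (∑ j ∈ S, c j * Real.exp (x j))
        + b * Real.log (∑ j ∈ S, c j * Real.exp (z j)) := by
        rw [Real.log_mul (ne_of_gt (Real.rpow_pos_of_pos (hpos x) a))
          (ne_of_gt (Real.rpow_pos_of_pos (hpos z) b)),
          Real.log_rpow (hpos x), Real.log_rpow (hpos z)]
    _ = a • Real.log (∑ j ∈ S, c j * Real.exp (x j))
        + b • Real.log (∑ j ∈ S, c j * Real.exp (z j)) := by simp [smul_eq_mul]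

/-- Relative smoothness of ℒ(θ) = KL(y, Ae^θ) with respect to 𝒜(θ) = Σ_{i,j} Aᵢⱼ e^{θⱼ}:
the difference 𝒜 - ℒ is convex on ℝⁿ. -/
theorem EMML_relative_smoothness {m n : ℕ} (A : Matrix (Fin m) (Fin n) ℝ) (y : Fin m → ℝ)
    (hA : ∀ i j, 0 ≤ A i j) (hrow : ∀ i, ∃ j, 0 < A i j) (hcol : ∀ j, ∃ i, 0 < A i j)
    (hy : ∀ i, 0 ≤ y i) :
    ConvexOn ℝ Set.univ (fun θ : Fin n → ℝ =>
      (∑ i, ∑ j, A i j * Real.exp (θ j))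
        - KL y (A.mulVec (fun j => Real.exp (θ j)))) := by
  classical
  -- the positive support of each row
  set S : Fin m → Finset (Fin n) := fun i => Finset.univ.filter (fun j => 0 < A i j) with hS
  have hSne : ∀ i, (S i).Nonempty := by
    intro i
    obtain ⟨j, hj⟩ := hrow i
    exact ⟨j, by simp [hS, hj]⟩
  have hsum_eq : ∀ (i : Fin m) (θ : Fin n → ℝ),
      ∑ j, A i j * Real.exp (θ j) = ∑ j ∈ S i, A i j * Real.exp (θ j) := by
    intro i θ
    rw [hS]
    rw [← Finset.sum_filter_add_sum_filter_not Finset.univ (fun j => 0 < A i j)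
      (fun j => A i j * Real.exp (θ j))]
    have : ∑ j ∈ Finset.univ.filter (fun j => ¬ 0 < A i j), A i j * Real.exp (θ j) = 0 := by
      apply Finset.sum_eq_zero
      intro j hj
      simp only [Finset.mem_filter] at hj
      have : A i j = 0 := le_antisymm (not_lt.mp hj.2) (hA i j)
      simp [this]
    rw [this, add_zero]
  have hvpos : ∀ (i : Fin m) (θ : Fin n → ℝ), 0 < ∑ j, A i j * Real.exp (θ j) := by
    intro i θ
    rw [hsum_eq]
    obtain ⟨j0, hj0⟩ := hSne i
    have hj0' : 0 < A i j0 := by simpa [hS] using (Finset.mem_filter.mp hj0).2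
    exact Finset.sum_pos' (fun j hj => le_of_lt (mul_pos
      (by simpa [hS] using (Finset.mem_filter.mp hj).2) (Real.exp_pos _)))
      ⟨j0, hj0, mul_pos hj0' (Real.exp_pos _)⟩
  -- rewrite the objective as constant + Σᵢ yᵢ log((Ae^θ)ᵢ)
  have hfun : (fun θ : Fin n → ℝ =>
      (∑ i, ∑ j, A i j * Real.exp (θ j))
        - KL y (A.mulVec (fun j => Real.exp (θ j))))
      = fun θ : Fin n → ℝ =>
        (∑ i, (y i - y i * Real.log (y i)))
          + ∑ i, y i * Real.log (∑ j ∈ S i, A i j * Real.exp (θ j)) := by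
    funext θ
    have hv : ∀ i, A.mulVec (fun j => Real.exp (θ j)) i = ∑ j, A i j * Real.exp (θ j) := by
      intro i; simp [Matrix.mulVec, dotProduct]
    simp only [KL, ← Finset.sum_add_distrib, ← Finset.sum_sub_distrib]
    apply Finset.sum_congr rfl
    intro i _
    rw [hv i, ← hsum_eq i θ]
    set v := ∑ j, A i j * Real.exp (θ j) with hvdef
    have hvp : 0 < v := hvpos i θ
    rcases eq_or_lt_of_le (hy i) with h0 | hyp
    · rw [← h0]; simp
    · rw [Real.log_div (ne_of_gt hyp) (ne_of_gt hvp)]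
      ring
  rw [hfun]
  apply ConvexOn.add (convexOn_const _ convex_univ)
  apply convexOn_finset_sum convex_univ
  intro i _
  have hconv := convexOn_log_sum_exp (A i) (S i) (hSne i)
    (fun j hj => by simpa [hS] using (Finset.mem_filter.mp hj).2)
  exact hconv.smul (hy i)
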